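/- Let I1 ⊆ S1 = K[x_1,…,x_n] and I2 ⊆ S2 = K[y_1,…,y_m] be squarefree monomial ideals in disjoint sets of variables, and let I1·I2 denote their product in S = K[x_1,…,x_n,y_1,…,y_m]. Then for every k ≥ 1 one has (I1·I2)^[k] = I1^[k] · I2^[k]. -/

import Mathlib

open MvPolynomial

/-- The squarefree monomial `∏ i ∈ F, xᵢ`. -/
noncomputable def sqMon (K : Type) [Field K] {σ : Type} (F : Finset σ) :
    MvPolynomial σ K := ∏ i ∈ F, X i

/-- `I` is a squarefree monomial ideal if it is generated by squarefree monomials. -/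
def IsSqfreeMonomialIdeal (K : Type) [Field K] {σ : Type}
    (I : Ideal (MvPolynomial σ K)) : Prop :=
  ∃ 𝒢 : Set (Finset σ), I = Ideal.span ((sqMon K) '' 𝒢)

/-- The `k`-th squarefree power `I^[k]`: the ideal generated by all squarefree
monomials belonging to `I^k`. -/
noncomputable def sqfreePower (K : Type) [Field K] {σ : Type}
    (I : Ideal (MvPolynomial σ K)) (k : ℕ) : Ideal (MvPolynomial σ K) :=
  Ideal.span {m | ∃ F : Finset σ, m = sqMon K F ∧ m ∈ I ^ k}

/-- The monomial grade `ν(I)`: the largest `k` with `I^[k] ≠ (0)`. -/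
noncomputable def monGrade (K : Type) [Field K] {σ : Type}
    (I : Ideal (MvPolynomial σ K)) : ℕ :=
  sSup {k | sqfreePower K I k ≠ ⊥}

/-- The initial degree of a squarefree monomial ideal: the least degree of a
(squarefree) monomial belonging to it. -/
noncomputable def indeg (K : Type) [Field K] {σ : Type}
    (I : Ideal (MvPolynomial σ K)) : ℕ :=
  sInf {d | ∃ F : Finset σ, F.card = d ∧ sqMon K F ∈ I}

/-- The depth of `S/I` over the polynomial ring `S`: the longest length of a
regular sequence on `S/I` consisting of elements of the irrelevant maximal ideal. -/
noncomputable def polyDepth (K : Type) [Field K] {σ : Type}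
    (I : Ideal (MvPolynomial σ K)) : ℕ :=
  sSup {k | ∃ rs : List (MvPolynomial σ K), rs.length = k ∧
    (∀ r ∈ rs, r ∈ Ideal.span (Set.range (X : σ → MvPolynomial σ K))) ∧
    RingTheory.Sequence.IsRegular (MvPolynomial σ K ⧸ I) rs}

/-- The normalized depth function `g_I(k) = depth(S/I^[k]) - (indeg(I^[k]) - 1)`. -/
noncomputable def nDepth (K : Type) [Field K] {σ : Type}
    (I : Ideal (MvPolynomial σ K)) (k : ℕ) : ℤ :=
  (polyDepth K (sqfreePower K I k) : ℤ) - ((indeg K (sqfreePower K I k) : ℤ) - 1)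

noncomputable def dF {σ : Type} (F : Finset σ) : σ →₀ ℕ := ∑ i ∈ F, Finsupp.single i 1

lemma dF_apply {σ : Type} [DecidableEq σ] (F : Finset σ) (x : σ) :
    dF F x = if x ∈ F then 1 else 0 := by
  simp [dF, Finsupp.finset_sum_apply, Finsupp.single_apply]

lemma dF_insert {σ : Type} [DecidableEq σ] {F : Finset σ} {a : σ} (h : a ∉ F) :
    dF (insert a F) = Finsupp.single a 1 + dF F := by
  rw [dF, Finset.sum_insert h]; rfl

lemma sqMon_eq_monomial (K : Type) [Field K] {σ : Type} (F : Finset σ) :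
    sqMon K F = monomial (dF F) (1 : K) := by
  classical
  induction F using Finset.induction with
  | empty => simp [sqMon, dF]
  | @insert a s h ih =>
      rw [sqMon, Finset.prod_insert h, ← sqMon, ih, dF_insert h, X, monomial_mul, one_mul]

lemma prod_monomial_one (K : Type) [Field K] {σ ι : Type} (s : Finset ι)
    (u : ι → (σ →₀ ℕ)) :
    ∏ i ∈ s, monomial (u i) (1 : K) = monomial (∑ i ∈ s, u i) 1 := by
  classical
  induction s using Finset.induction with
  | empty => simp
  | @insert a s' h ih => rw [Finset.prod_insert h, ih, Finset.sum_insert h, monomial_mul, one_mul]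

lemma span_sqMon_pow (K : Type) [Field K] {σ : Type} (𝒢 : Set (Finset σ)) (k : ℕ) :
    (Ideal.span (sqMon K '' 𝒢)) ^ k =
      Ideal.span ((fun u => monomial u (1 : K)) ''
        {u | ∃ G : Fin k → Finset σ, (∀ i, G i ∈ 𝒢) ∧ u = ∑ i, dF (G i)}) := by
  rw [Ideal.span, Submodule.span_pow]
  congr 1
  ext p
  constructor
  · intro hp
    obtain ⟨f, hf⟩ := Set.mem_pow.mp hp
    have hmem : ∀ i, ∃ G ∈ 𝒢, sqMon K G = (f i : MvPolynomial σ K) := fun i => (f i).2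
    choose G hG hGf using hmem
    refine ⟨∑ i, dF (G i), ⟨G, hG, rfl⟩, ?_⟩
    show monomial (∑ i, dF (G i)) (1 : K) = p
    rw [← prod_monomial_one]
    simp only [← sqMon_eq_monomial, hGf]
    rw [← List.prod_ofFn]
    exact hf
  · rintro ⟨u, ⟨G, hG, rfl⟩, rfl⟩
    show monomial (∑ i, dF (G i)) (1 : K) ∈ _
    rw [← prod_monomial_one]
    simp only [← sqMon_eq_monomial]
    refine Set.mem_pow.mpr ⟨fun i => ⟨sqMon K (G i), ⟨G i, hG i, rfl⟩⟩, ?_⟩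
    rw [List.prod_ofFn]

lemma monomial_mem_span (K : Type) [Field K] {σ : Type} (S : Set (σ →₀ ℕ)) (v : σ →₀ ℕ) :
    monomial v (1 : K) ∈ Ideal.span ((fun u => monomial u (1 : K)) '' S) ↔ ∃ u ∈ S, u ≤ v := by
  classical
  rw [mem_ideal_span_monomial_image]
  have hs : (monomial v (1 : K)).support = {v} := by
    rw [support_monomial, if_neg one_ne_zero]
  rw [hs]
  simp

lemma sqMon_mem_pow (K : Type) [Field K] {σ : Type} (𝒢 : Set (Finset σ)) (k : ℕ) (F : Finset σ) :
    sqMon K F ∈ (Ideal.span (sqMon K '' 𝒢)) ^ k ↔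
      ∃ G : Fin k → Finset σ, (∀ i, G i ∈ 𝒢) ∧ ∑ i, dF (G i) ≤ dF F := by
  rw [span_sqMon_pow, sqMon_eq_monomial, monomial_mem_span]
  constructor
  · rintro ⟨u, ⟨G, hG, rfl⟩, hle⟩; exact ⟨G, hG, hle⟩
  · rintro ⟨G, hG, hle⟩; exact ⟨_, ⟨G, hG, rfl⟩, hle⟩

section SumStuff

variable {σ₁ σ₂ : Type} [DecidableEq σ₁] [DecidableEq σ₂]

/-- Union of an `inl`-image and an `inr`-image. -/
def uSet (A : Finset σ₁) (B : Finset σ₂) : Finset (σ₁ ⊕ σ₂) :=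
  A.image Sum.inl ∪ B.image Sum.inr

lemma mem_uSet_inl (A : Finset σ₁) (B : Finset σ₂) (x : σ₁) :
    Sum.inl x ∈ uSet A B ↔ x ∈ A := by simp [uSet]

lemma mem_uSet_inr (A : Finset σ₁) (B : Finset σ₂) (y : σ₂) :
    Sum.inr y ∈ uSet A B ↔ y ∈ B := by simp [uSet]

lemma dF_uSet_inl (A : Finset σ₁) (B : Finset σ₂) (x : σ₁) :
    dF (uSet A B) (Sum.inl x) = dF A x := by
  classical
  rw [dF_apply, dF_apply]
  simp [mem_uSet_inl]

lemma dF_uSet_inr (A : Finset σ₁) (B : Finset σ₂) (y : σ₂) :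
    dF (uSet A B) (Sum.inr y) = dF B y := by
  classical
  rw [dF_apply, dF_apply]
  simp [mem_uSet_inr]

lemma exists_uSet (F : Finset (σ₁ ⊕ σ₂)) : ∃ A B, F = uSet A B := by
  classical
  refine ⟨F.preimage Sum.inl Sum.inl_injective.injOn,
          F.preimage Sum.inr Sum.inr_injective.injOn, ?_⟩
  ext x
  cases x with
  | inl a => simp [mem_uSet_inl, Finset.mem_preimage]
  | inr b => simp [mem_uSet_inr, Finset.mem_preimage]

lemma rename_sqMon (K : Type) [Field K] {σ τ : Type} [DecidableEq τ] (f : σ → τ) (hf : Function.Injective f)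
    (F : Finset σ) :
    MvPolynomial.rename f (sqMon K F) = sqMon K (F.image f) := by
  rw [sqMon, map_prod, sqMon, Finset.prod_image fun a _ b _ h => hf h]
  simp [rename_X]

lemma sqMon_uSet (K : Type) [Field K] (A : Finset σ₁) (B : Finset σ₂) :
    sqMon K (uSet A B) =
      MvPolynomial.rename (Sum.inl : σ₁ → σ₁ ⊕ σ₂) (sqMon K A) *
        MvPolynomial.rename (Sum.inr : σ₂ → σ₁ ⊕ σ₂) (sqMon K B) := by
  rw [rename_sqMon K _ Sum.inl_injective, rename_sqMon K _ Sum.inr_injective, uSet, sqMon,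
    Finset.prod_union (by simp [Finset.disjoint_left])]
  rfl

lemma sum_dF_le_iff {k : ℕ} (G₁ : Fin k → Finset σ₁) (G₂ : Fin k → Finset σ₂)
    (A : Finset σ₁) (B : Finset σ₂) :
    (∑ i, dF (uSet (G₁ i) (G₂ i))) ≤ dF (uSet A B) ↔
      (∑ i, dF (G₁ i)) ≤ dF A ∧ (∑ i, dF (G₂ i)) ≤ dF B := by
  simp only [Finsupp.le_def, Finsupp.finset_sum_apply]
  constructor
  · intro h
    constructor
    · intro x
      have := h (Sum.inl x)
      simpa only [dF_uSet_inl] using this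
    · intro y
      have := h (Sum.inr y)
      simpa only [dF_uSet_inr] using this
  · rintro ⟨h1, h2⟩ x
    cases x with
    | inl a => simpa only [dF_uSet_inl] using h1 a
    | inr b => simpa only [dF_uSet_inr] using h2 b

end SumStuff

lemma span_prod_eq (K : Type) [Field K] {σ₁ σ₂ : Type} [DecidableEq σ₁] [DecidableEq σ₂]
    (𝒢₁ : Set (Finset σ₁)) (𝒢₂ : Set (Finset σ₂)) :
    Ideal.map (MvPolynomial.rename (Sum.inl : σ₁ → σ₁ ⊕ σ₂)) (Ideal.span (sqMon K '' 𝒢₁)) *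
      Ideal.map (MvPolynomial.rename (Sum.inr : σ₂ → σ₁ ⊕ σ₂)) (Ideal.span (sqMon K '' 𝒢₂)) =
    Ideal.span (sqMon K '' {A | ∃ G₁ ∈ 𝒢₁, ∃ G₂ ∈ 𝒢₂, A = uSet G₁ G₂}) := by
  rw [Ideal.map_span, Ideal.map_span, Ideal.span_mul_span']
  congr 1
  ext p
  constructor
  · intro hp
    obtain ⟨a, ha, b, hb, rfl⟩ := Set.mem_mul.mp hp
    obtain ⟨q, ⟨G₁, hG₁, rfl⟩, rfl⟩ := ha
    obtain ⟨r, ⟨G₂, hG₂, rfl⟩, rfl⟩ := hb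
    exact ⟨uSet G₁ G₂, ⟨G₁, hG₁, G₂, hG₂, rfl⟩, sqMon_uSet K G₁ G₂⟩
  · rintro ⟨A, ⟨G₁, hG₁, G₂, hG₂, rfl⟩, rfl⟩
    refine Set.mem_mul.mpr ⟨MvPolynomial.rename Sum.inl (sqMon K G₁),
      ⟨sqMon K G₁, ⟨G₁, hG₁, rfl⟩, rfl⟩, MvPolynomial.rename Sum.inr (sqMon K G₂),
      ⟨sqMon K G₂, ⟨G₂, hG₂, rfl⟩, rfl⟩, (sqMon_uSet K G₁ G₂).symm⟩

lemma mem_P_pow_iff (K : Type) [Field K] {σ₁ σ₂ : Type} [DecidableEq σ₁] [DecidableEq σ₂]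
    (𝒢₁ : Set (Finset σ₁)) (𝒢₂ : Set (Finset σ₂)) (k : ℕ) (F₁ : Finset σ₁) (F₂ : Finset σ₂) :
    sqMon K (uSet F₁ F₂) ∈
      (Ideal.map (MvPolynomial.rename (Sum.inl : σ₁ → σ₁ ⊕ σ₂)) (Ideal.span (sqMon K '' 𝒢₁)) *
       Ideal.map (MvPolynomial.rename (Sum.inr : σ₂ → σ₁ ⊕ σ₂)) (Ideal.span (sqMon K '' 𝒢₂))) ^ k ↔
      sqMon K F₁ ∈ (Ideal.span (sqMon K '' 𝒢₁)) ^ k ∧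
        sqMon K F₂ ∈ (Ideal.span (sqMon K '' 𝒢₂)) ^ k := by
  rw [span_prod_eq, sqMon_mem_pow, sqMon_mem_pow, sqMon_mem_pow]
  constructor
  · rintro ⟨G, hG, hle⟩
    choose G₁ h1 G₂ h2 hGu using hG
    simp only [hGu] at hle
    obtain ⟨ha, hb⟩ := (sum_dF_le_iff G₁ G₂ F₁ F₂).mp hle
    exact ⟨⟨G₁, h1, ha⟩, ⟨G₂, h2, hb⟩⟩
  · rintro ⟨⟨G₁, h1, ha⟩, ⟨G₂, h2, hb⟩⟩
    exact ⟨fun i => uSet (G₁ i) (G₂ i), fun i => ⟨G₁ i, h1 i, G₂ i, h2 i, rfl⟩,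
      (sum_dF_le_iff G₁ G₂ F₁ F₂).mpr ⟨ha, hb⟩⟩

/-- For squarefree monomial ideals `I₁ ⊆ K[x₁,…,xₙ]` and `I₂ ⊆ K[y₁,…,y_m]` in disjoint
sets of variables, the squarefree powers of the product in `K[x₁,…,xₙ,y₁,…,y_m]` satisfy
`(I₁I₂)^[k] = I₁^[k]·I₂^[k]` for every `k ≥ 1`. -/
theorem sqfreePower_of_product (K : Type) [Field K] (n m : ℕ)
    (I₁ : Ideal (MvPolynomial (Fin n) K)) (I₂ : Ideal (MvPolynomial (Fin m) K))
    (h₁ : IsSqfreeMonomialIdeal K I₁) (h₂ : IsSqfreeMonomialIdeal K I₂)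
    (P : Ideal (MvPolynomial (Fin n ⊕ Fin m) K))
    (hP : P = Ideal.map (MvPolynomial.rename (Sum.inl : Fin n → Fin n ⊕ Fin m)) I₁ *
              Ideal.map (MvPolynomial.rename (Sum.inr : Fin m → Fin n ⊕ Fin m)) I₂) :
    ∀ k : ℕ, 1 ≤ k →
      sqfreePower K P k =
        Ideal.map (MvPolynomial.rename (Sum.inl : Fin n → Fin n ⊕ Fin m))
            (sqfreePower K I₁ k) *
          Ideal.map (MvPolynomial.rename (Sum.inr : Fin m → Fin n ⊕ Fin m))
            (sqfreePower K I₂ k) := by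
  classical
  obtain ⟨𝒢₁, rfl⟩ := h₁
  obtain ⟨𝒢₂, rfl⟩ := h₂
  subst hP
  intro k hk
  apply le_antisymm
  · rw [sqfreePower, Ideal.span_le]
    rintro p ⟨F, rfl, hmem⟩
    obtain ⟨F₁, F₂, rfl⟩ := exists_uSet F
    obtain ⟨m1, m2⟩ := (mem_P_pow_iff K 𝒢₁ 𝒢₂ k F₁ F₂).mp hmem
    rw [sqMon_uSet]
    exact Ideal.mul_mem_mul
      (Ideal.mem_map_of_mem _ (Ideal.subset_span ⟨F₁, rfl, m1⟩))
      (Ideal.mem_map_of_mem _ (Ideal.subset_span ⟨F₂, rfl, m2⟩))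
  · simp only [sqfreePower]
    rw [Ideal.map_span, Ideal.map_span, Ideal.span_mul_span', Ideal.span_le]
    rintro p hp
    obtain ⟨a, ha, b, hb, rfl⟩ := Set.mem_mul.mp hp
    obtain ⟨q, ⟨F₁, rfl, hq⟩, rfl⟩ := ha
    obtain ⟨r, ⟨F₂, rfl, hr⟩, rfl⟩ := hb
    rw [← sqMon_uSet K F₁ F₂]
    exact Ideal.subset_span ⟨uSet F₁ F₂, rfl,
      (mem_P_pow_iff K 𝒢₁ 𝒢₂ k F₁ F₂).mpr ⟨hq, hr⟩⟩
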